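/- Let V be a finite-dimensional complex vector space equipped with a non-degenerate alternating bilinear form Q, and let R ⊆ V be a subset that spans V. For δ ∈ R let T_δ be the transvection x ↦ x + Q(x,δ)δ, and let M be the smallest algebraic subgroup of the symplectic group Sp(V,Q) containing all the transvections T_δ (δ ∈ R). Suppose that R consists of a finite union of orbits of the action of M on V. Then one of the following holds: (i) there exists a subspace U of V with U ≠ {0} and U ≠ V, invariant under every element of M, such that R ⊆ U ∪ U^⊥; or (ii) M = Sp(V,Q). -/

import Mathlib

set_option linter.unusedSectionVars false
set_option maxHeartbeats 1000000

open Module LinearMap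


/-- A function `End(V) → ℂ` is a polynomial function if it lies in the ℂ-algebra generated
by the linear functionals on `End(V)` (equivalently, it is a polynomial in the matrix
entries with respect to any basis). -/
def IsPolyFun (V : Type*) [AddCommGroup V] [Module ℂ V]
    (f : Module.End ℂ V → ℂ) : Prop :=
  f ∈ Algebra.adjoin ℂ {g : Module.End ℂ V → ℂ | ∃ φ : Module.End ℂ V →ₗ[ℂ] ℂ, g = ⇑φ}

/-- A subset of `End(V)` is Zariski closed if it is the common zero set of a family of
polynomial functions. -/
def IsZarClosed (V : Type*) [AddCommGroup V] [Module ℂ V]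
    (Z : Set (Module.End ℂ V)) : Prop :=
  ∃ S : Set (Module.End ℂ V → ℂ), (∀ f ∈ S, IsPolyFun V f) ∧
    Z = {A | ∀ f ∈ S, f A = 0}

/-- An algebraic subgroup of `GL(V)` is a subgroup which is the intersection of `GL(V)`
with a Zariski closed subset of `End(V)`. -/
def IsAlgSubgroup (V : Type*) [AddCommGroup V] [Module ℂ V]
    (H : Subgroup (Module.End ℂ V)ˣ) : Prop :=
  ∃ Z : Set (Module.End ℂ V), IsZarClosed V Z ∧
    (H : Set (Module.End ℂ V)ˣ) = {g : (Module.End ℂ V)ˣ | (g : Module.End ℂ V) ∈ Z}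



section defs
variable {V : Type*} [AddCommGroup V] [Module ℂ V]
variable (Q : V →ₗ[ℂ] V →ₗ[ℂ] ℂ)

/-- rank-one nilpotent `x ↦ Q x δ • δ`. -/
noncomputable def DelN (δ : V) : Module.End ℂ V :=
  (LinearMap.toSpanSingleton ℂ V δ) ∘ₗ (Q.flip δ)

@[simp] lemma DelN_apply (δ x : V) : DelN Q δ x = Q x δ • δ := rfl

lemma DelN_sq {δ : V} (h : Q δ δ = 0) : DelN Q δ * DelN Q δ = 0 := by
  ext x
  simp [DelN, Module.End.mul_apply, h]

/-- transvection endomorphism. -/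
noncomputable def Dtr (δ : V) (t : ℂ) : Module.End ℂ V := 1 + t • DelN Q δ

lemma Dtr_apply (δ : V) (t : ℂ) (x : V) : Dtr Q δ t x = x + (t * Q x δ) • δ := by
  simp [Dtr, mul_smul]

lemma Dtr_mul {δ : V} (h : Q δ δ = 0) (t s : ℂ) :
    Dtr Q δ t * Dtr Q δ s = Dtr Q δ (t + s) := by
  have h2 := DelN_sq Q h
  simp only [Dtr, mul_add, add_mul, one_mul, mul_one, mul_smul_comm, smul_mul_assoc, h2,
    smul_smul, smul_zero]
  rw [add_smul]
  abel_nf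

/-- transvection as unit. -/
noncomputable def Dunit (δ : V) (h : Q δ δ = 0) (t : ℂ) : (Module.End ℂ V)ˣ :=
  ⟨Dtr Q δ t, Dtr Q δ (-t), by rw [Dtr_mul Q h]; simp [Dtr], by rw [Dtr_mul Q h]; simp [Dtr]⟩

@[simp] lemma Dunit_val (δ : V) (h : Q δ δ = 0) (t : ℂ) :
    (Dunit Q δ h t : Module.End ℂ V) = Dtr Q δ t := rfl

lemma Dtr_pow {δ : V} (h : Q δ δ = 0) (n : ℕ) : Dtr Q δ 1 ^ n = Dtr Q δ (n : ℂ) := by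
  induction n with
  | zero => simp [Dtr]
  | succ n ih => rw [pow_succ, ih, Dtr_mul Q h]; norm_num

end defs


section poly
variable {V : Type*} [AddCommGroup V] [Module ℂ V]

/-- restriction of a polynomial function to an affine line is polynomial. -/
lemma exists_poly_line {f : Module.End ℂ V → ℂ} (hf : IsPolyFun V f)
    (A N : Module.End ℂ V) : ∃ p : Polynomial ℂ, ∀ t : ℂ, f (A + t • N) = p.eval t := by
  induction hf using Algebra.adjoin_induction with
  | mem g hg =>
    obtain ⟨φ, rfl⟩ := hg
    refine ⟨Polynomial.C (φ A) + Polynomial.X * Polynomial.C (φ N), fun t => ?_⟩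
    rw [map_add, map_smul, smul_eq_mul]
    simp only [Polynomial.eval_add, Polynomial.eval_mul, Polynomial.eval_C, Polynomial.eval_X]
  | algebraMap r => exact ⟨Polynomial.C r, fun t => by rw [Polynomial.eval_C]; rfl⟩
  | add x y hx hy px py =>
    obtain ⟨p, hp⟩ := px; obtain ⟨q, hq⟩ := py
    refine ⟨p + q, fun t => ?_⟩
    rw [Pi.add_apply, hp t, hq t, Polynomial.eval_add]
  | mul x y hx hy px py =>
    obtain ⟨p, hp⟩ := px; obtain ⟨q, hq⟩ := py
    refine ⟨p * q, fun t => ?_⟩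
    rw [Pi.mul_apply, hp t, hq t, Polynomial.eval_mul]

lemma poly_eq_zero_of_nat {p : Polynomial ℂ} (h : ∀ n : ℕ, p.eval (n : ℂ) = 0) : p = 0 := by
  apply Polynomial.eq_zero_of_infinite_isRoot
  apply Set.infinite_of_injective_forall_mem (f := fun n : ℕ => (n : ℂ))
  · exact Nat.cast_injective
  · exact fun n => h n

variable (Q : V →ₗ[ℂ] V →ₗ[ℂ] ℂ)



/-- Key: if an algebraic subgroup contains the transvection along δ (t = 1),
it contains the whole one-parameter group. -/
lemma alg_subgroup_tunit_mem {H : Subgroup (Module.End ℂ V)ˣ} (hH : IsAlgSubgroup V H)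
    {δ : V} (hδδ : Q δ δ = 0)
    (hg : ∃ g ∈ H, ∀ x, (g : Module.End ℂ V) x = x + Q x δ • δ) (t : ℂ) :
    Dunit Q δ hδδ t ∈ H := by
  obtain ⟨Z, ⟨S, hS, rfl⟩, hHZ⟩ := hH
  obtain ⟨g, hgH, hgval⟩ := hg
  have hgval' : (g : Module.End ℂ V) = Dtr Q δ 1 := by
    ext x; rw [hgval x, Dtr_apply]; simp
  have hmemZ : ∀ u : (Module.End ℂ V)ˣ, u ∈ H ↔ (u : Module.End ℂ V) ∈
      {A | ∀ f ∈ S, f A = 0} := fun u => by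
    constructor
    · intro hu; have : u ∈ (H : Set (Module.End ℂ V)ˣ) := hu
      rw [hHZ] at this; exact this
    · intro hu; have : u ∈ {g : (Module.End ℂ V)ˣ |
        (g : Module.End ℂ V) ∈ {A | ∀ f ∈ S, f A = 0}} := hu
      rw [← hHZ] at this; exact this
  rw [hmemZ]
  intro f hf
  obtain ⟨p, hp⟩ := exists_poly_line (hS f hf) 1 (DelN Q δ)
  have hzero : ∀ n : ℕ, p.eval (n : ℂ) = 0 := by
    intro n
    have hpow : g ^ n ∈ H := pow_mem hgH n
    rw [hmemZ] at hpow
    have : ((g ^ n : (Module.End ℂ V)ˣ) : Module.End ℂ V) = 1 + (n : ℂ) • DelN Q δ := by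
      rw [Units.val_pow_eq_pow_val, hgval', Dtr_pow Q hδδ, Dtr]
    rw [this] at hpow
    have := hpow f hf
    exact (hp ((n : ℕ) : ℂ)).symm.trans this
  have : p = 0 := poly_eq_zero_of_nat hzero
  show f (Dtr Q δ t) = 0
  have : f (1 + t • DelN Q δ) = p.eval t := hp t
  rw [Dtr, this, ‹p = 0›]; simp

end poly

section sp
variable {V : Type*} [AddCommGroup V] [Module ℂ V]
variable (Q : V →ₗ[ℂ] V →ₗ[ℂ] ℂ)

lemma skew (halt : ∀ x, Q x x = 0) (x y : V) : Q y x = - Q x y := by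
  have h := halt (x + y)
  simp only [map_add, LinearMap.add_apply, halt] at h
  linear_combination h

/-- the symplectic group as a subgroup of units of End. -/
def SpGroup : Subgroup (Module.End ℂ V)ˣ where
  carrier := {g : (Module.End ℂ V)ˣ | ∀ x y,
    Q ((g : Module.End ℂ V) x) ((g : Module.End ℂ V) y) = Q x y}
  mul_mem' := by
    intro a b ha hb x y
    simp only [Units.val_mul, Module.End.mul_apply]
    rw [ha, hb]
  one_mem' := by intro x y; simp
  inv_mem' := by
    intro a ha x y
    have key : ∀ z, (a : Module.End ℂ V) (((a⁻¹ : (Module.End ℂ V)ˣ) : Module.End ℂ V) z)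
        = z := by
      intro z
      rw [← Module.End.mul_apply, ← Units.val_mul, mul_inv_cancel, Units.val_one,
        Module.End.one_apply]
    have := ha (((a⁻¹ : (Module.End ℂ V)ˣ) : Module.End ℂ V) x)
      (((a⁻¹ : (Module.End ℂ V)ˣ) : Module.End ℂ V) y)
    rw [key, key] at this
    exact this.symm

lemma mem_SpGroup {g : (Module.End ℂ V)ˣ} : g ∈ SpGroup Q ↔ ∀ x y,
    Q ((g : Module.End ℂ V) x) ((g : Module.End ℂ V) y) = Q x y := Iff.rfl

lemma Dtr_symp (halt : ∀ x, Q x x = 0) (δ : V) (t : ℂ) (x y : V) :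
    Q (Dtr Q δ t x) (Dtr Q δ t y) = Q x y := by
  rw [Dtr_apply, Dtr_apply]
  simp only [map_add, map_smul, LinearMap.add_apply, LinearMap.smul_apply, smul_eq_mul]
  rw [halt δ, skew Q halt y δ]
  ring

variable [FiniteDimensional ℂ V]

lemma polyfun_bilin (B : Module.End ℂ V →ₗ[ℂ] Module.End ℂ V →ₗ[ℂ] ℂ) :
    IsPolyFun V (fun A => B A A) := by
  classical
  let b := Module.finBasis ℂ (Module.End ℂ V)
  have key : (fun A => B A A) =
      ∑ i, (fun A => b.coord i A * B (b i) A) := by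
    funext A
    rw [Finset.sum_apply]
    have h1 : B A A = B (∑ i, b.repr A i • b i) A := by rw [b.sum_repr A]
    rw [h1, map_sum, LinearMap.coe_sum, Finset.sum_apply]
    exact Finset.sum_congr rfl fun i _ => by
      rw [map_smul, LinearMap.smul_apply, smul_eq_mul]; rfl
  rw [IsPolyFun, key]
  apply Subalgebra.sum_mem
  intro i _
  exact mul_mem (Algebra.subset_adjoin ⟨b.coord i, rfl⟩)
    (Algebra.subset_adjoin ⟨B (b i), rfl⟩)

end sp

section comb
variable {V : Type*} [AddCommGroup V] [Module ℂ V]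
variable (Q : V →ₗ[ℂ] V →ₗ[ℂ] ℂ)

lemma line_finite {a b : ℂ} (h : ¬(a = 0 ∧ b = 0)) : {t : ℂ | a + t * b = 0}.Finite := by
  rcases eq_or_ne b 0 with hb | hb
  · subst hb
    have ha : a ≠ 0 := fun h' => h ⟨h', rfl⟩
    convert Set.finite_empty
    ext t; simp [ha]
  · apply Set.Finite.subset (Set.finite_singleton (-a / b))
    intro t ht
    have : a + t * b = 0 := ht
    simp only [Set.mem_singleton_iff]
    field_simp
    linear_combination this

lemma avoid3 {a b c d e f : ℂ} (h1 : ¬(a = 0 ∧ b = 0)) (h2 : ¬(c = 0 ∧ d = 0))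
    (h3 : ¬(e = 0 ∧ f = 0)) :
    ∃ t : ℂ, a + t * b ≠ 0 ∧ c + t * d ≠ 0 ∧ e + t * f ≠ 0 := by
  have hfin : ({t : ℂ | a + t * b = 0} ∪ ({t : ℂ | c + t * d = 0} ∪
      {t : ℂ | e + t * f = 0})).Finite :=
    ((line_finite h1).union ((line_finite h2).union (line_finite h3)))
  obtain ⟨t, ht⟩ := hfin.infinite_compl.nonempty
  simp only [Set.mem_compl_iff, Set.mem_union, Set.mem_setOf_eq, not_or] at ht
  exact ⟨t, ht.1, ht.2.1, ht.2.2⟩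

variable (halt : ∀ x, Q x x = 0)
  (hnd : ∀ x, (∀ y, Q x y = 0) → x = 0)
  (R : Set V) (hspan : Submodule.span ℂ R = ⊤)
  (hst : ∀ x ∈ R, ∀ y ∈ R, Q x y ≠ 0 → ∀ c : ℂ, x + c • y ∈ R)

include halt hst in
lemma plane_mem {v δ : V} (hv : v ∈ R) (hδ : δ ∈ R) (hq : Q v δ ≠ 0) (a b : ℂ)
    (ha : a ≠ 0) : a • v + b • δ ∈ R := by
  have h1 : v + (1 : ℂ) • δ ∈ R := hst v hv δ hδ hq 1
  have e1 : Q (v + (1 : ℂ) • δ) v ≠ 0 := by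
    simp only [map_add, map_smul, LinearMap.add_apply, LinearMap.smul_apply, smul_eq_mul,
      halt, skew Q halt v δ]
    simpa using hq
  have h2 : (v + (1 : ℂ) • δ) + (a - 1) • v ∈ R := hst _ h1 v hv e1 _
  have e2 : (v + (1 : ℂ) • δ) + (a - 1) • v = a • v + (1 : ℂ) • δ := by module
  rw [e2] at h2
  have e3 : Q (a • v + (1 : ℂ) • δ) δ ≠ 0 := by
    simp only [map_add, map_smul, LinearMap.add_apply, LinearMap.smul_apply, smul_eq_mul,
      halt]
    simpa [ha] using hq
  have h3 : (a • v + (1 : ℂ) • δ) + (b - 1) • δ ∈ R := hst _ h2 δ hδ e3 _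
  have e4 : (a • v + (1 : ℂ) • δ) + (b - 1) • δ = a • v + b • δ := by module
  rwa [e4] at h3

include hnd hspan in
lemma neighbor {v : V} (hv : v ≠ 0) : ∃ δ ∈ R, Q v δ ≠ 0 := by
  by_contra h
  push_neg at h
  apply hv
  apply hnd
  intro y
  have hy : y ∈ Submodule.span ℂ R := by rw [hspan]; exact Submodule.mem_top
  induction hy using Submodule.span_induction with
  | mem x hx => exact h x hx
  | zero => simp
  | add x y _ _ hx hy => simp [hx, hy]
  | smul c x _ hx => simp [hx]

include halt hnd hspan hst in
lemma scalar_mem {v : V} (hv : v ∈ R) (hv0 : v ≠ 0) {c : ℂ} (hc : c ≠ 0) : c • v ∈ R := by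
  obtain ⟨δ, hδ, hq⟩ := neighbor Q hnd R hspan hv0
  have := plane_mem Q halt R hst hv hδ hq c 0 hc
  simpa using this

include halt hst in
lemma three_step {v w y : V} (hv : v ∈ R) (hw : w ∈ R) (hy : y ∈ R)
    (h1 : Q v y ≠ 0) (h2 : Q y w ≠ 0) (c : ℂ) (h3 : Q (v + c • w) y ≠ 0) :
    v + c • w ∈ R := by
  obtain ⟨s, hs1, hs2, hs0⟩ : ∃ s : ℂ, Q v w + s * Q y w ≠ 0 ∧ (0 : ℂ) + s * 1 ≠ 0 ∧
      (0 : ℂ) + s * 1 ≠ 0 := by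
    obtain ⟨s, a1, a2, a3⟩ := avoid3 (a := Q v w) (b := Q y w) (c := 0) (d := 1) (e := 0)
      (f := 1) (fun h => h2 h.2) (by simp) (by simp)
    exact ⟨s, a1, a2, a3⟩
  have hs : s ≠ 0 := by simpa using hs2
  have x1 : v + s • y ∈ R := hst v hv y hy h1 s
  have e1 : Q (v + s • y) w ≠ 0 := by
    simpa only [map_add, map_smul, LinearMap.add_apply, LinearMap.smul_apply,
      smul_eq_mul] using hs1
  have x2 : (v + s • y) + c • w ∈ R := hst _ x1 w hw e1 c
  have e2 : Q ((v + s • y) + c • w) y ≠ 0 := by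
    have : Q ((v + s • y) + c • w) y = Q (v + c • w) y + s * Q y y := by
      simp only [map_add, map_smul, LinearMap.add_apply, LinearMap.smul_apply, smul_eq_mul]
      ring
    rw [this, halt y]
    simpa using h3
  have x3 : ((v + s • y) + c • w) + (-s) • y ∈ R := hst _ x2 y hy e2 _
  have e3 : ((v + s • y) + c • w) + (-s) • y = v + c • w := by module
  rwa [e3] at x3

def SpCompRel (R : Set V) : V → V → Prop :=
  Relation.ReflTransGen (fun x y => y ∈ R ∧ Q x y ≠ 0)

lemma SpCompRel.mem_of {R : Set V} {v w : V} (hv : v ∈ R) (h : SpCompRel Q R v w) : w ∈ R := by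
  induction h with
  | refl => exact hv
  | tail _ h2 _ => exact h2.1

include halt hnd hst in
lemma mid_lemma {v w : V} (hv : v ∈ R) (hw : w ∈ R) (hw0 : w ≠ 0)
    (hcomp : Submodule.span ℂ {z | SpCompRel Q R v z} = ⊤) :
    ∃ y ∈ R, Q v y ≠ 0 ∧ Q y w ≠ 0 := by
  -- find y₀ in the component of v with Q w y₀ ≠ 0
  obtain ⟨y₀, hy₀c, hy₀q⟩ : ∃ y₀, SpCompRel Q R v y₀ ∧ Q w y₀ ≠ 0 := by
    by_contra h
    push_neg at h
    apply hw0
    apply hnd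
    intro y
    have hy : y ∈ Submodule.span ℂ {z | SpCompRel Q R v z} := by
      rw [hcomp]; exact Submodule.mem_top
    induction hy using Submodule.span_induction with
    | mem x hx => exact h x hx
    | zero => simp
    | add x y _ _ hx hy => simp [hx, hy]
    | smul c x _ hx => simp [hx]
  -- induction along the path from v to y₀
  have main : ∀ y, SpCompRel Q R v y → y ∈ R ∧ (∀ z ∈ R, Q y z ≠ 0 → Q z w ≠ 0 →
      ∃ y' ∈ R, Q v y' ≠ 0 ∧ Q y' w ≠ 0) := by
    intro y hy
    induction hy with
    | refl => exact ⟨hv, fun z hz h1 h2 => ⟨z, hz, h1, h2⟩⟩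
    | @tail b c _ hbc ih =>
      refine ⟨hbc.1, fun z hz h1 h2 => ?_⟩
      obtain ⟨hbR, ihb⟩ := ih
      -- z adjacent to c ; produce z' adjacent to b with Q z' w ≠ 0
      obtain ⟨t, ht1, ht2, -⟩ := avoid3 (a := Q b z) (b := Q b c) (c := Q z w)
        (d := Q c w) (e := 0) (f := 1) (fun h => hbc.2 h.2) (fun h => h2 h.1) (by simp)
      have hzc : Q z c ≠ 0 := by
        rw [skew Q halt c z]
        simpa using h1
      have hz' : z + t • c ∈ R := hst z hz c hbc.1 hzc t
      apply ihb (z + t • c) hz'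
      · simpa only [map_add, map_smul, LinearMap.add_apply, LinearMap.smul_apply,
          smul_eq_mul] using ht1
      · simpa only [map_add, map_smul, LinearMap.add_apply, LinearMap.smul_apply,
          smul_eq_mul] using ht2
  -- y₀'s own hypothesis : z := y₀ + w? need Q y₀ w ≠ 0 : yes from hy₀q via skew
  have hy₀R : y₀ ∈ R := SpCompRel.mem_of Q hv hy₀c
  have hqy₀w : Q y₀ w ≠ 0 := by
    rw [skew Q halt w y₀]
    simpa using hy₀q
  -- middle element z := y₀ + w ... but need z ∈ R : use hst y₀ w
  have hzR : y₀ + (1 : ℂ) • w ∈ R := hst y₀ hy₀R w hw hqy₀w 1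
  have h1 : Q y₀ (y₀ + (1 : ℂ) • w) ≠ 0 := by
    simpa [halt] using hqy₀w
  have h2 : Q (y₀ + (1 : ℂ) • w) w ≠ 0 := by
    simpa [halt] using hqy₀w
  exact (main y₀ hy₀c).2 _ hzR h1 h2

include halt hnd hspan hst in
lemma pair_mem
    (hmid : ∀ v w : V, v ∈ R → w ∈ R → v ≠ 0 → w ≠ 0 → ∃ y ∈ R, Q v y ≠ 0 ∧ Q y w ≠ 0)
    {v w : V} (hv : v ∈ R) (hw : w ∈ R) (hv0 : v ≠ 0) (hw0 : w ≠ 0) (c : ℂ)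
    (hvw0 : v + c • w ≠ 0) : v + c • w ∈ R := by
  by_cases hQvw : Q v w ≠ 0
  · have := plane_mem Q halt R hst hv hw hQvw 1 c one_ne_zero
    simpa using this
  push_neg at hQvw
  rcases eq_or_ne c 0 with rfl | hc
  · simpa using hv
  set z := v + c • w with hzdef
  have hQzv : Q z v = 0 := by
    simp [hzdef, halt, skew Q halt v w, hQvw]
  have hQzw : Q z w = 0 := by
    simp [hzdef, halt, hQvw]
  obtain ⟨δ, hδ, hQzδ⟩ := neighbor Q hnd R hspan hvw0
  obtain ⟨y, hy, q1, q2⟩ := hmid v w hv hw hv0 hw0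
  by_cases h3 : Q z y ≠ 0
  · exact three_step Q halt R hst hv hw hy q1 q2 c h3
  push_neg at h3
  by_cases hvδ : Q v δ = 0
  · -- case B : Q w δ ≠ 0
    have hwδ : Q w δ ≠ 0 := by
      intro h
      apply hQzδ
      simp [hzdef, hvδ, h]
    have hδw : Q δ w ≠ 0 := by
      rw [skew Q halt w δ]; simpa using hwδ
    -- choose s with Q δ y + s * Q δ w ≠ 0
    obtain ⟨s, hs1, -, -⟩ := avoid3 (a := Q δ y) (b := Q δ w) (c := 0) (d := 1) (e := 0)
      (f := 1) (fun h => hδw h.2) (by simp) (by simp)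
    have hz1 : y + s • w ∈ R := hst y hy w hw q2 s
    have hQδz1 : Q δ (y + s • w) ≠ 0 := by
      simpa only [map_add, map_smul, smul_eq_mul] using hs1
    -- choose t
    obtain ⟨t, ht1, ht2, -⟩ := avoid3 (a := Q δ w) (b := Q y w + s * Q w w)
      (c := 0) (d := 1) (e := 0) (f := 1) (fun h => hδw h.1) (by simp) (by simp)
    have ht0 : t ≠ 0 := by simpa using ht2
    have hystar : δ + t • (y + s • w) ∈ R := hst δ hδ _ hz1 hQδz1 t
    set ys := δ + t • (y + s • w) with hysdef
    have c1 : Q v ys ≠ 0 := by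
      have : Q v ys = t * Q v y := by
        simp only [hysdef, map_add, map_smul, smul_eq_mul, hvδ, hQvw]
        try ring
      rw [this]; exact mul_ne_zero ht0 q1
    have c2 : Q ys w ≠ 0 := by
      have : Q ys w = Q δ w + t * (Q y w + s * Q w w) := by
        simp only [hysdef, map_add, map_smul, LinearMap.add_apply, LinearMap.smul_apply,
          smul_eq_mul]
        try ring
      rw [this]; exact ht1
    have c3 : Q z ys ≠ 0 := by
      have : Q z ys = Q z δ + t * (Q z y + s * Q z w) := by
        simp only [hysdef, map_add, map_smul, smul_eq_mul]
        try ring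
      rw [this, h3, hQzw]; simpa using hQzδ
    exact three_step Q halt R hst hv hw hystar c1 c2 c c3
  · -- case : Q v δ ≠ 0
    by_cases hwδ : Q w δ = 0
    · -- case C
      have hδv : Q δ v ≠ 0 := by
        rw [skew Q halt v δ]; simpa using hvδ
      obtain ⟨s, hs1, -, -⟩ := avoid3 (a := Q δ y) (b := Q δ v) (c := 0) (d := 1)
        (e := 0) (f := 1) (fun h => hδv h.2) (by simp) (by simp)
      have hyv : Q y v ≠ 0 := by
        rw [skew Q halt v y]; simpa using q1
      have hz1 : y + s • v ∈ R := hst y hy v hv hyv s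
      have hQδz1 : Q δ (y + s • v) ≠ 0 := by
        simpa only [map_add, map_smul, smul_eq_mul] using hs1
      obtain ⟨t, ht1, ht2, -⟩ := avoid3 (a := Q v δ) (b := Q v y + s * Q v v)
        (c := 0) (d := 1) (e := 0) (f := 1) (fun h => hvδ h.1) (by simp) (by simp)
      have ht0 : t ≠ 0 := by simpa using ht2
      have hystar : δ + t • (y + s • v) ∈ R := hst δ hδ _ hz1 hQδz1 t
      set ys := δ + t • (y + s • v) with hysdef
      have c1 : Q v ys ≠ 0 := by
        have : Q v ys = Q v δ + t * (Q v y + s * Q v v) := by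
          simp only [hysdef, map_add, map_smul, smul_eq_mul]
          try ring
        rw [this]; exact ht1
      have c2 : Q ys w ≠ 0 := by
        have : Q ys w = Q δ w + t * (Q y w + s * Q v w) := by
          simp only [hysdef, map_add, map_smul, LinearMap.add_apply, LinearMap.smul_apply,
            smul_eq_mul]
          try ring
        have hδw : Q δ w = 0 := by
          rw [skew Q halt w δ, hwδ]; simp
        rw [this, hδw, hQvw]
        simpa [mul_add] using mul_ne_zero ht0 q2
      have c3 : Q z ys ≠ 0 := by
        have : Q z ys = Q z δ + t * (Q z y + s * Q z v) := by
          simp only [hysdef, map_add, map_smul, smul_eq_mul]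
          try ring
        rw [this, h3, hQzv]; simpa using hQzδ
      exact three_step Q halt R hst hv hw hystar c1 c2 c c3
    · -- case A : both nonzero, y* = δ
      have hδw : Q δ w ≠ 0 := by
        rw [skew Q halt w δ]; simpa using hwδ
      exact three_step Q halt R hst hv hw hδ hvδ hδw c hQzδ

include halt hnd hspan hst in
lemma all_mem
    (hmid : ∀ v w : V, v ∈ R → w ∈ R → v ≠ 0 → w ≠ 0 → ∃ y ∈ R, Q v y ≠ 0 ∧ Q y w ≠ 0)
    {z : V} (hz : z ≠ 0) : z ∈ R := by
  have hzmem : z ∈ Submodule.span ℂ R := by rw [hspan]; exact Submodule.mem_top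
  have : z ≠ 0 → z ∈ R := by
    clear hz
    induction hzmem using Submodule.span_induction with
    | mem x hx => exact fun _ => hx
    | zero => exact fun h => absurd rfl h
    | add x y _ _ hx hy =>
      intro hxy
      rcases eq_or_ne x 0 with rfl | hx0
      · rw [zero_add] at hxy ⊢; exact hy hxy
      rcases eq_or_ne y 0 with rfl | hy0
      · rw [add_zero] at hxy ⊢; exact hx hxy
      have := pair_mem Q halt hnd R hspan hst hmid (hx hx0) (hy hy0) hx0 hy0 1
        (by simpa using hxy)
      simpa using this
    | smul c x _ hx =>
      intro hcx
      have hc : c ≠ 0 := fun h => hcx (by simp [h])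
      have hx0 : x ≠ 0 := fun h => hcx (by simp [h])
      exact scalar_mem Q halt hnd R hspan hst (hx hx0) hx0 hc
  exact this hz

end comb

section Mlayer
variable {V : Type*} [AddCommGroup V] [Module ℂ V] [FiniteDimensional ℂ V]
variable (Q : V →ₗ[ℂ] V →ₗ[ℂ] ℂ)

lemma SpGroup_isAlg : IsAlgSubgroup V (SpGroup Q) := by
  classical
  refine ⟨{A | ∀ f ∈ {f : Module.End ℂ V → ℂ | ∃ x y : V,
      f = fun A => Q (A x) (A y) - Q x y}, f A = 0}, ⟨_, ?_, rfl⟩, ?_⟩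
  · rintro f ⟨x, y, rfl⟩
    have hB : IsPolyFun V (fun A : Module.End ℂ V => Q (A x) (A y)) := by
      have := polyfun_bilin (V := V)
        (Q.compl₁₂ (LinearMap.applyₗ x) (LinearMap.applyₗ y))
      simpa using this
    have hC : IsPolyFun V (fun _ : Module.End ℂ V => Q x y) := by
      have := Subalgebra.algebraMap_mem
        (Algebra.adjoin ℂ {g : Module.End ℂ V → ℂ | ∃ φ : Module.End ℂ V →ₗ[ℂ] ℂ, g = ⇑φ})
        (Q x y)
      exact this
    exact sub_mem hB hC
  · ext g
    constructor
    · rintro hg f ⟨x, y, rfl⟩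
      have := (mem_SpGroup Q).mp hg x y
      simp [this]
    · intro hg
      rw [SetLike.mem_coe, mem_SpGroup]
      intro x y
      have := hg _ ⟨x, y, rfl⟩
      simpa [sub_eq_zero] using this

variable (halt : ∀ x, Q x x = 0)
variable (R : Set V) (M : Subgroup (Module.End ℂ V)ˣ)
variable (hM : M = sInf {H : Subgroup (Module.End ℂ V)ˣ | IsAlgSubgroup V H ∧
      ∀ δ ∈ R, ∃ g ∈ H, ∀ x, (g : Module.End ℂ V) x = x + Q x δ • δ})

include hM in
lemma M_tunit_mem {δ : V} (hδ : δ ∈ R) (t : ℂ) : Dunit Q δ (halt δ) t ∈ M := by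
  rw [hM, Subgroup.mem_sInf]
  intro H hH
  exact alg_subgroup_tunit_mem Q hH.1 (halt δ) (hH.2 δ hδ) t

include halt hM in
lemma M_le_Sp : M ≤ SpGroup Q := by
  rw [hM]
  apply sInf_le
  refine ⟨SpGroup_isAlg Q, fun δ hδ => ⟨Dunit Q δ (halt δ) 1, ?_, fun x => ?_⟩⟩
  · rw [mem_SpGroup]
    intro x y
    exact Dtr_symp Q halt δ 1 x y
  · rw [Dunit_val, Dtr_apply, one_mul]

variable (horb : ∃ T : Set V, T.Finite ∧
      R = ⋃ t ∈ T, {x | ∃ g ∈ M, x = (g : Module.End ℂ V) t})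

include horb in
lemma orbit_closed {x : V} (hx : x ∈ R) {g : (Module.End ℂ V)ˣ} (hg : g ∈ M) :
    (g : Module.End ℂ V) x ∈ R := by
  obtain ⟨T, -, hT⟩ := horb
  rw [hT] at hx ⊢
  simp only [Set.mem_iUnion, Set.mem_setOf_eq] at hx ⊢
  obtain ⟨t, ht, h, hhM, rfl⟩ := hx
  exact ⟨t, ht, g * h, mul_mem hg hhM, by rw [Units.val_mul, Module.End.mul_apply]⟩

include halt hM horb in
lemma hst_holds : ∀ x ∈ R, ∀ y ∈ R, Q x y ≠ 0 → ∀ c : ℂ, x + c • y ∈ R := by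
  intro x hx y hy hq c
  have hmem := M_tunit_mem Q halt R M hM hy (c / Q x y)
  have := orbit_closed _ _ horb hx hmem
  rw [Dunit_val, Dtr_apply, div_mul_cancel₀ _ hq] at this
  exact this

end Mlayer

section gen
variable {V : Type*} [AddCommGroup V] [Module ℂ V] [FiniteDimensional ℂ V]
variable (Q : V →ₗ[ℂ] V →ₗ[ℂ] ℂ)

lemma mem_orth_iff {W : Submodule ℂ V} {x : V} :
    x ∈ LinearMap.BilinForm.orthogonal Q W ↔ ∀ n ∈ W, Q n x = 0 :=
  Iff.rfl

variable (halt : ∀ x, Q x x = 0) (hnd : ∀ x, (∀ y, Q x y = 0) → x = 0)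
variable (M' : Subgroup (Module.End ℂ V)ˣ)
variable (hT : ∀ (z : V) (t : ℂ), Dunit Q z (halt z) t ∈ M')

include halt in
lemma orth_skew {W : Submodule ℂ V} {x : V} (hx : x ∈ LinearMap.BilinForm.orthogonal Q W)
    {w : V} (hw : w ∈ W) : Q x w = 0 := by
  rw [skew Q halt w x, (mem_orth_iff Q).mp hx w hw, neg_zero]

include halt hnd in
lemma finrank_orth (W : Submodule ℂ V) :
    Module.finrank ℂ (LinearMap.BilinForm.orthogonal Q W) =
      Module.finrank ℂ V - Module.finrank ℂ W := by
  refine LinearMap.BilinForm.finrank_orthogonal ⟨fun x hx => hnd x hx, ?_⟩ W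
  intro y h
  apply hnd y; intro x
  rw [skew Q halt x y, h x, neg_zero]

include halt hnd in
lemma sup_orth {W : Submodule ℂ V}
    (hdisj : W ⊓ LinearMap.BilinForm.orthogonal Q W = ⊥) :
    W ⊔ LinearMap.BilinForm.orthogonal Q W = ⊤ := by
  apply Submodule.eq_top_of_finrank_eq
  have h1 := Submodule.finrank_sup_add_finrank_inf_eq W (LinearMap.BilinForm.orthogonal Q W)
  rw [hdisj] at h1
  have h2 := finrank_orth Q halt hnd W
  have h3 : Module.finrank ℂ W ≤ Module.finrank ℂ V := W.finrank_le
  have h4 : Module.finrank ℂ (W ⊔ LinearMap.BilinForm.orthogonal Q W : Submodule ℂ V)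
      ≤ Module.finrank ℂ V := Submodule.finrank_le _
  simp only [finrank_bot, add_zero] at h1
  omega

include halt hnd in
lemma orth_nondeg {W : Submodule ℂ V}
    (hdisj : W ⊓ LinearMap.BilinForm.orthogonal Q W = ⊥) {x : V}
    (hx : x ∈ LinearMap.BilinForm.orthogonal Q W) (hx0 : x ≠ 0) :
    ∃ y ∈ LinearMap.BilinForm.orthogonal Q W, Q x y ≠ 0 := by
  by_contra h
  push_neg at h
  apply hx0
  apply hnd
  intro y
  have hy : y ∈ W ⊔ LinearMap.BilinForm.orthogonal Q W := by
    rw [sup_orth Q halt hnd hdisj]; trivial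
  obtain ⟨w, hw, p, hp, rfl⟩ := Submodule.mem_sup.mp hy
  rw [map_add, orth_skew Q halt hx hw, h p hp, add_zero]

include halt hT in
lemma move1 (W : Submodule ℂ V) {a b : V}
    (ha : a ∈ LinearMap.BilinForm.orthogonal Q W)
    (hb : b ∈ LinearMap.BilinForm.orthogonal Q W)
    (hq : Q a b ≠ 0) :
    ∃ h : (Module.End ℂ V)ˣ, h ∈ M' ∧ h ∈ SpGroup Q ∧
      (∀ w ∈ W, (h : Module.End ℂ V) w = w) ∧ (h : Module.End ℂ V) a = b ∧
      (∀ x, Q x a = Q x b → (h : Module.End ℂ V) x = x) := by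
  refine ⟨Dunit Q (b - a) (halt _) (Q a b)⁻¹, hT _ _, ?_, ?_, ?_, ?_⟩
  · rw [mem_SpGroup]
    intro x y
    exact Dtr_symp Q halt _ _ x y
  · intro w hw
    rw [Dunit_val, Dtr_apply]
    have : Q w (b - a) = 0 := by
      rw [map_sub, (mem_orth_iff Q).mp hb w hw, (mem_orth_iff Q).mp ha w hw, sub_zero]
    rw [this, mul_zero, zero_smul, add_zero]
  · rw [Dunit_val, Dtr_apply]
    have : Q a (b - a) = Q a b := by rw [map_sub, halt, sub_zero]
    rw [this, inv_mul_cancel₀ hq, one_smul]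
    abel
  · intro x hx
    rw [Dunit_val, Dtr_apply]
    have : Q x (b - a) = 0 := by rw [map_sub, hx, sub_self]
    rw [this, mul_zero, zero_smul, add_zero]

include halt hnd hT in
lemma move2 (W : Submodule ℂ V)
    (hdisj : W ⊓ LinearMap.BilinForm.orthogonal Q W = ⊥) {a b : V}
    (ha : a ∈ LinearMap.BilinForm.orthogonal Q W)
    (hb : b ∈ LinearMap.BilinForm.orthogonal Q W)
    (ha0 : a ≠ 0) (hb0 : b ≠ 0) :
    ∃ h : (Module.End ℂ V)ˣ, h ∈ M' ∧ h ∈ SpGroup Q ∧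
      (∀ w ∈ W, (h : Module.End ℂ V) w = w) ∧ (h : Module.End ℂ V) a = b := by
  rcases eq_or_ne a b with rfl | hab
  · exact ⟨1, one_mem _, one_mem _, fun w _ => rfl, rfl⟩
  by_cases hq : Q a b ≠ 0
  · obtain ⟨h, h1, h2, h3, h4, -⟩ := move1 Q halt M' hT W ha hb hq
    exact ⟨h, h1, h2, h3, h4⟩
  push_neg at hq
  obtain ⟨y₁, hy₁, hqy₁⟩ := orth_nondeg Q halt hnd hdisj ha ha0
  obtain ⟨y₂, hy₂, hqy₂⟩ := orth_nondeg Q halt hnd hdisj hb hb0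
  -- find c adjacent to both
  obtain ⟨c, hc, hca, hcb⟩ : ∃ c ∈ LinearMap.BilinForm.orthogonal Q W,
      Q a c ≠ 0 ∧ Q c b ≠ 0 := by
    by_cases h1 : Q b y₁ = 0
    · by_cases h2 : Q a y₂ = 0
      · refine ⟨y₁ + y₂, Submodule.add_mem _ hy₁ hy₂, ?_, ?_⟩
        · rw [map_add, h2, add_zero]; exact hqy₁
        · rw [skew Q halt b (y₁ + y₂), map_add, h1, zero_add]
          simpa using hqy₂
      · exact ⟨y₂, hy₂, h2, by rw [skew Q halt b y₂]; simpa using hqy₂⟩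
    · exact ⟨y₁, hy₁, hqy₁, by rw [skew Q halt b y₁]; simpa using h1⟩
  obtain ⟨h1, h1M, h1S, h1W, h1a, -⟩ := move1 Q halt M' hT W ha hc hca
  obtain ⟨h2, h2M, h2S, h2W, h2c, -⟩ := move1 Q halt M' hT W hc hb hcb
  refine ⟨h2 * h1, mul_mem h2M h1M, mul_mem h2S h1S, fun w hw => ?_, ?_⟩
  · rw [Units.val_mul, Module.End.mul_apply, h1W w hw, h2W w hw]
  · rw [Units.val_mul, Module.End.mul_apply, h1a, h2c]

include halt hT in
lemma move_fix (W : Submodule ℂ V) {u a b : V}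
    (hu : u ∈ LinearMap.BilinForm.orthogonal Q W)
    (ha : a ∈ LinearMap.BilinForm.orthogonal Q W)
    (hb : b ∈ LinearMap.BilinForm.orthogonal Q W)
    (hua : Q u a = 1) (hub : Q u b = 1) :
    ∃ h : (Module.End ℂ V)ˣ, h ∈ M' ∧ h ∈ SpGroup Q ∧
      (∀ w ∈ W, (h : Module.End ℂ V) w = w) ∧ (h : Module.End ℂ V) u = u ∧
      (h : Module.End ℂ V) a = b := by
  rcases eq_or_ne a b with rfl | hab
  · exact ⟨1, one_mem _, one_mem _, fun w _ => rfl, rfl, rfl⟩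
  by_cases hq : Q a b ≠ 0
  · obtain ⟨h, h1, h2, h3, h4, h5⟩ := move1 Q halt M' hT W ha hb hq
    exact ⟨h, h1, h2, h3, h5 u (by rw [hua, hub]), h4⟩
  push_neg at hq
  set c := a + u with hcdef
  have hc : c ∈ LinearMap.BilinForm.orthogonal Q W := Submodule.add_mem _ ha hu
  have hac : Q a c ≠ 0 := by
    rw [hcdef, map_add, halt, zero_add, skew Q halt u a, hua]
    simp
  have hcb : Q c b ≠ 0 := by
    rw [hcdef, map_add, LinearMap.add_apply, hq, zero_add, hub]
    simp
  have huc : Q u c = 1 := by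
    rw [hcdef, map_add, hua, halt, add_zero]
  obtain ⟨h1, h1M, h1S, h1W, h1a, h1f⟩ := move1 Q halt M' hT W ha hc hac
  obtain ⟨h2, h2M, h2S, h2W, h2c, h2f⟩ := move1 Q halt M' hT W hc hb hcb
  refine ⟨h2 * h1, mul_mem h2M h1M, mul_mem h2S h1S, fun w hw => ?_, ?_, ?_⟩
  · rw [Units.val_mul, Module.End.mul_apply, h1W w hw, h2W w hw]
  · rw [Units.val_mul, Module.End.mul_apply, h1f u (by rw [hua, huc]),
      h2f u (by rw [huc, hub])]
  · rw [Units.val_mul, Module.End.mul_apply, h1a, h2c]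

include halt hnd hT in
lemma sp_gen_aux : ∀ (k : ℕ) (W : Submodule ℂ V) (g : (Module.End ℂ V)ˣ),
    g ∈ SpGroup Q → (∀ w ∈ W, (g : Module.End ℂ V) w = w) →
    W ⊓ LinearMap.BilinForm.orthogonal Q W = ⊥ →
    Module.finrank ℂ (LinearMap.BilinForm.orthogonal Q W) ≤ k → g ∈ M' := by
  intro k
  induction k using Nat.strong_induction_on with
  | _ k IH =>
  intro W g hg hfix hdisj hk
  rcases eq_or_ne (LinearMap.BilinForm.orthogonal Q W) ⊥ with horth | horth
  · -- orthogonal is trivial : W = ⊤ and g = 1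
    have hr := finrank_orth Q halt hnd W
    rw [horth, finrank_bot] at hr
    have hle : Module.finrank ℂ W ≤ Module.finrank ℂ V := W.finrank_le
    have hW : W = ⊤ := Submodule.eq_top_of_finrank_eq (by omega)
    have : g = 1 := by
      apply Units.ext
      apply LinearMap.ext
      intro x
      have hx : x ∈ W := by rw [hW]; trivial
      simpa using hfix x hx
    rw [this]; exact one_mem _
  · obtain ⟨u, huWp, hu0⟩ := Submodule.exists_mem_ne_zero_of_ne_bot horth
    have huW : u ∉ W := by
      intro h
      have : u ∈ W ⊓ LinearMap.BilinForm.orthogonal Q W := ⟨h, huWp⟩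
      rw [hdisj] at this
      exact hu0 this
    -- g preserves the orthogonal complement
    have hpres : ∀ x ∈ LinearMap.BilinForm.orthogonal Q W, (g : Module.End ℂ V) x ∈
        LinearMap.BilinForm.orthogonal Q W := by
      intro x hx
      rw [mem_orth_iff]
      intro n hn
      have := (mem_SpGroup Q).mp hg n x
      rw [hfix n hn] at this
      rw [this]
      exact (mem_orth_iff Q).mp hx n hn
    have hginj : ∀ x : V, (g : Module.End ℂ V) x = 0 → x = 0 := by
      intro x hx
      have : ((g⁻¹ * g : (Module.End ℂ V)ˣ) : Module.End ℂ V) x = x := by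
        rw [inv_mul_cancel]; simp
      rw [Units.val_mul, Module.End.mul_apply, hx, map_zero] at this
      exact this.symm
    -- move g u back to u
    have hgu : (g : Module.End ℂ V) u ∈ LinearMap.BilinForm.orthogonal Q W :=
      hpres u huWp
    have hgu0 : (g : Module.End ℂ V) u ≠ 0 := fun h => hu0 (hginj u h)
    obtain ⟨h₁, h₁M, h₁S, h₁W, h₁a⟩ := move2 Q halt hnd M' hT W hdisj hgu huWp hgu0 hu0
    set g₁ := h₁ * g with hg₁def
    have hg₁S : g₁ ∈ SpGroup Q := mul_mem h₁S hg
    have hg₁W : ∀ w ∈ W, (g₁ : Module.End ℂ V) w = w := fun w hw => by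
      rw [hg₁def, Units.val_mul, Module.End.mul_apply, hfix w hw, h₁W w hw]
    have hg₁u : (g₁ : Module.End ℂ V) u = u := by
      rw [hg₁def, Units.val_mul, Module.End.mul_apply, h₁a]
    -- find v with Q u v = 1
    obtain ⟨v', hv', hqv'⟩ := orth_nondeg Q halt hnd hdisj huWp hu0
    set v := (Q u v')⁻¹ • v' with hvdef
    have hvWp : v ∈ LinearMap.BilinForm.orthogonal Q W := Submodule.smul_mem _ _ hv'
    have hquv : Q u v = 1 := by
      rw [hvdef, map_smul, smul_eq_mul, inv_mul_cancel₀ hqv']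
    have hv0 : v ≠ 0 := by
      intro h; rw [h, map_zero] at hquv; exact one_ne_zero hquv.symm
    -- g₁ preserves orth W as well
    have hpres₁ : ∀ x ∈ LinearMap.BilinForm.orthogonal Q W, (g₁ : Module.End ℂ V) x ∈
        LinearMap.BilinForm.orthogonal Q W := by
      intro x hx
      rw [mem_orth_iff]
      intro n hn
      have := (mem_SpGroup Q).mp hg₁S n x
      rw [hg₁W n hn] at this
      rw [this]
      exact (mem_orth_iff Q).mp hx n hn
    have hg₁v : (g₁ : Module.End ℂ V) v ∈ LinearMap.BilinForm.orthogonal Q W :=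
      hpres₁ v hvWp
    have hqug₁v : Q u ((g₁ : Module.End ℂ V) v) = 1 := by
      have := (mem_SpGroup Q).mp hg₁S u v
      rw [hg₁u] at this
      rw [this, hquv]
    obtain ⟨h₂, h₂M, h₂S, h₂W, h₂u, h₂a⟩ := move_fix Q halt M' hT W huWp hg₁v hvWp
      hqug₁v hquv
    set g₂ := h₂ * g₁ with hg₂def
    have hg₂S : g₂ ∈ SpGroup Q := mul_mem h₂S hg₁S
    have hg₂W : ∀ w ∈ W, (g₂ : Module.End ℂ V) w = w := fun w hw => by
      rw [hg₂def, Units.val_mul, Module.End.mul_apply, hg₁W w hw, h₂W w hw]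
    have hg₂u : (g₂ : Module.End ℂ V) u = u := by
      rw [hg₂def, Units.val_mul, Module.End.mul_apply, hg₁u, h₂u]
    have hg₂v : (g₂ : Module.End ℂ V) v = v := by
      rw [hg₂def, Units.val_mul, Module.End.mul_apply, h₂a]
    -- the enlarged subspace
    set W' := W ⊔ (Submodule.span ℂ {u} ⊔ Submodule.span ℂ {v}) with hW'def
    have huW' : u ∈ W' := by
      apply Submodule.mem_sup_right
      apply Submodule.mem_sup_left
      exact Submodule.mem_span_singleton_self u
    have hvW' : v ∈ W' := by
      apply Submodule.mem_sup_right
      apply Submodule.mem_sup_right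
      exact Submodule.mem_span_singleton_self v
    have hWW' : W ≤ W' := le_sup_left
    have hfix₂ : ∀ w ∈ W', (g₂ : Module.End ℂ V) w = w := by
      intro w hw
      have hsub : W' ≤ LinearMap.eqLocus (g₂ : Module.End ℂ V) LinearMap.id := by
        refine sup_le (fun x hx => hg₂W x hx) (sup_le ?_ ?_)
        · rw [Submodule.span_le, Set.singleton_subset_iff]
          exact hg₂u
        · rw [Submodule.span_le, Set.singleton_subset_iff]
          exact hg₂v
      exact hsub hw
    -- disjointness for W'
    have hdisj' : W' ⊓ LinearMap.BilinForm.orthogonal Q W' = ⊥ := by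
      rw [eq_bot_iff]
      rintro x ⟨hx1, hx2⟩
      obtain ⟨w, hw, p, hp, rfl⟩ := Submodule.mem_sup.mp hx1
      obtain ⟨pu, hpu, pv, hpv, rfl⟩ := Submodule.mem_sup.mp hp
      obtain ⟨s, rfl⟩ := Submodule.mem_span_singleton.mp hpu
      obtain ⟨t, rfl⟩ := Submodule.mem_span_singleton.mp hpv
      have hQu : Q u (w + (s • u + t • v)) = 0 := (mem_orth_iff Q).mp hx2 u huW'
      have hQv : Q v (w + (s • u + t • v)) = 0 := (mem_orth_iff Q).mp hx2 v hvW'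
      have hQuw : Q u w = 0 := orth_skew Q halt huWp hw
      have hQvw : Q v w = 0 := orth_skew Q halt hvWp hw
      have hQvu : Q v u = -1 := by rw [skew Q halt u v, hquv]
      have ht : t = 0 := by
        have e : Q u w + (s * Q u u + t * Q u v) = 0 := by
          rw [← hQu]; simp only [map_add, map_smul, smul_eq_mul]
        rw [hQuw, halt u, hquv] at e
        linear_combination e
      have hs : s = 0 := by
        have e : Q v w + (s * Q v u + t * Q v v) = 0 := by
          rw [← hQv]; simp only [map_add, map_smul, smul_eq_mul]
        rw [hQvw, halt v, hQvu] at e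
        linear_combination -e
      rw [ht, hs] at hx1 hx2 ⊢
      simp only [zero_smul, add_zero] at hx1 hx2 ⊢
      have hxW : w ∈ W ⊓ LinearMap.BilinForm.orthogonal Q W := by
        refine ⟨hw, ?_⟩
        exact LinearMap.BilinForm.orthogonal_le hWW' hx2
      rw [hdisj] at hxW
      simpa using hxW
    -- rank decrease
    have hlt : W < W' := lt_of_le_of_ne hWW' (fun h => huW (h ▸ huW'))
    have hrlt : Module.finrank ℂ W < Module.finrank ℂ W' :=
      Submodule.finrank_lt_finrank_of_lt hlt
    have hr1 := finrank_orth Q halt hnd W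
    have hr2 := finrank_orth Q halt hnd W'
    have hle' : Module.finrank ℂ W' ≤ Module.finrank ℂ V := Submodule.finrank_le _
    have hdec : Module.finrank ℂ (LinearMap.BilinForm.orthogonal Q W') < k := by omega
    have hg₂M : g₂ ∈ M' := IH _ hdec W' g₂ hg₂S hfix₂ hdisj' le_rfl
    have : g = h₁⁻¹ * (h₂⁻¹ * g₂) := by
      rw [hg₂def, hg₁def]
      group
    rw [this]
    exact mul_mem (inv_mem h₁M) (mul_mem (inv_mem h₂M) hg₂M)

include halt hnd hT in
lemma sp_gen {g : (Module.End ℂ V)ˣ} (hg : g ∈ SpGroup Q) : g ∈ M' := by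
  apply sp_gen_aux Q halt hnd M' hT (Module.finrank ℂ
    (LinearMap.BilinForm.orthogonal Q (⊥ : Submodule ℂ V))) ⊥ g hg
  · intro w hw
    have : w = 0 := hw
    rw [this, map_zero]
  · exact bot_inf_eq _
  · exact le_rfl

end gen

section stab
variable {V : Type*} [AddCommGroup V] [Module ℂ V] [FiniteDimensional ℂ V]

/-- the stabilizer of a subspace, as a subgroup of units of End. -/
def stabSubgroup (U : Submodule ℂ V) : Subgroup (Module.End ℂ V)ˣ where
  carrier := {g : (Module.End ℂ V)ˣ | ∀ u ∈ U, (g : Module.End ℂ V) u ∈ U}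
  one_mem' := by intro u hu; simpa using hu
  mul_mem' := by
    intro a b ha hb u hu
    rw [Units.val_mul, Module.End.mul_apply]
    exact ha _ (hb u hu)
  inv_mem' := by
    intro a ha u hu
    have hres : ∀ x ∈ U, (a : Module.End ℂ V) x ∈ U := ha
    set e := LinearMap.restrict (a : Module.End ℂ V) hres with hedef
    have hcancel : ∀ x y : V, (a : Module.End ℂ V) x = (a : Module.End ℂ V) y → x = y := by
      intro x y h
      have hx : ((a⁻¹ * a : (Module.End ℂ V)ˣ) : Module.End ℂ V) x = x := by
        rw [inv_mul_cancel]; simp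
      have hy : ((a⁻¹ * a : (Module.End ℂ V)ˣ) : Module.End ℂ V) y = y := by
        rw [inv_mul_cancel]; simp
      rw [Units.val_mul, Module.End.mul_apply] at hx hy
      rw [← hx, ← hy, h]
    have hinj : Function.Injective e := by
      intro x y h
      apply Subtype.ext
      apply hcancel
      have := congrArg Subtype.val h
      simpa [hedef, LinearMap.restrict_apply] using this
    have hsurj : Function.Surjective e := (LinearMap.injective_iff_surjective).mp hinj
    obtain ⟨u', hu'⟩ := hsurj ⟨u, hu⟩
    have hval : (a : Module.End ℂ V) u'.1 = u := by
      have := congrArg Subtype.val hu'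
      simpa [hedef, LinearMap.restrict_apply] using this
    have : ((a⁻¹ : (Module.End ℂ V)ˣ) : Module.End ℂ V) u = u'.1 := by
      rw [← hval, ← Module.End.mul_apply, ← Units.val_mul, inv_mul_cancel]
      simp
    rw [this]
    exact u'.2

lemma stab_isAlg (U : Submodule ℂ V) : IsAlgSubgroup V (stabSubgroup U) := by
  classical
  refine ⟨{A | ∀ f ∈ {f : Module.End ℂ V → ℂ | ∃ u ∈ U, ∃ φ : V →ₗ[ℂ] ℂ,
      (∀ z ∈ U, φ z = 0) ∧ f = fun A => φ (A u)}, f A = 0}, ⟨_, ?_, rfl⟩, ?_⟩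
  · rintro f ⟨u, hu, φ, hφ, rfl⟩
    apply Algebra.subset_adjoin
    exact ⟨φ.comp (LinearMap.applyₗ u), rfl⟩
  · ext g
    constructor
    · rintro hg f ⟨u, hu, φ, hφ, rfl⟩
      exact hφ _ (hg u hu)
    · intro hg u hu
      by_contra hgu
      obtain ⟨φ, hφx, hφU⟩ := Submodule.exists_dual_map_eq_bot_of_notMem hgu inferInstance
      have hvan : ∀ z ∈ U, φ z = 0 := by
        intro z hz
        have : φ z ∈ U.map φ := Submodule.mem_map_of_mem hz
        rw [hφU] at this
        simpa using this
      exact hφx (hg _ ⟨u, hu, φ, hvan, rfl⟩)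

end stab


/-- Deligne's criterion, symplectic case.  Let `V` be a finite-dimensional
complex vector space with a non-degenerate alternating bilinear form `Q`, and `R ⊆ V` a
spanning set.  Let `M` be the smallest algebraic subgroup of `GL(V)` containing all the
transvections `x ↦ x + Q(x,δ)δ` for `δ ∈ R` (these lie in `Sp(V,Q)`, so `M ⊆ Sp(V,Q)`).
If `R` is a finite union of `M`-orbits, then either there is a nontrivial `M`-invariant
subspace `U` with `R ⊆ U ∪ U^⊥`, or `M = Sp(V,Q)`. -/
theorem stmt_1 (V : Type*) [AddCommGroup V] [Module ℂ V] [FiniteDimensional ℂ V]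
    (Q : V →ₗ[ℂ] V →ₗ[ℂ] ℂ)
    (halt : ∀ x, Q x x = 0)
    (hnd : ∀ x, (∀ y, Q x y = 0) → x = 0)
    (R : Set V) (hspan : Submodule.span ℂ R = ⊤)
    (M : Subgroup (Module.End ℂ V)ˣ)
    (hM : M = sInf {H : Subgroup (Module.End ℂ V)ˣ | IsAlgSubgroup V H ∧
      ∀ δ ∈ R, ∃ g ∈ H, ∀ x, (g : Module.End ℂ V) x = x + Q x δ • δ})
    (horb : ∃ T : Set V, T.Finite ∧
      R = ⋃ t ∈ T, {x | ∃ g ∈ M, x = (g : Module.End ℂ V) t}) :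
    (∃ U : Submodule ℂ V, U ≠ ⊥ ∧ U ≠ ⊤ ∧
      (∀ g ∈ M, ∀ u ∈ U, (g : Module.End ℂ V) u ∈ U) ∧
      R ⊆ (U : Set V) ∪ {x | ∀ u ∈ U, Q x u = 0}) ∨
    (M : Set (Module.End ℂ V)ˣ) =
      {g : (Module.End ℂ V)ˣ | ∀ x y, Q ((g : Module.End ℂ V) x) ((g : Module.End ℂ V) y) = Q x y} := by
  classical
  rcases subsingleton_or_nontrivial V with hsub | hnt
  · right
    ext g
    simp only [SetLike.mem_coe, Set.mem_setOf_eq]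
    constructor
    · intro _ x y
      have hx : (g : Module.End ℂ V) x = x := Subsingleton.elim _ _
      have hy : (g : Module.End ℂ V) y = y := Subsingleton.elim _ _
      rw [hx, hy]
    · intro _
      have : g = 1 := Units.ext (LinearMap.ext fun x => Subsingleton.elim _ _)
      rw [this]; exact one_mem _
  have hst := hst_holds Q halt R M hM horb
  by_cases hcase : ∃ v ∈ R, v ≠ 0 ∧ Submodule.span ℂ {z | SpCompRel Q R v z} ≠ ⊤
  · left
    obtain ⟨v, hvR, hv0, hUne⟩ := hcase
    set C := {z | SpCompRel Q R v z} with hCdef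
    set U := Submodule.span ℂ C with hUdef
    have hvC : v ∈ C := Relation.ReflTransGen.refl
    have hborth : ∀ δ ∈ R, δ ∉ C → ∀ u ∈ U, Q u δ = 0 := by
      intro δ hδ hδC u hu
      induction hu using Submodule.span_induction with
      | mem x hx =>
        by_contra hq
        exact hδC (Relation.ReflTransGen.tail hx ⟨hδ, hq⟩)
      | zero => simp
      | add x y _ _ hx hy => simp [hx, hy]
      | smul c x _ hx => simp [hx]
    refine ⟨U, ?_, hUne, ?_, ?_⟩
    · intro h
      apply hv0
      have : v ∈ U := Submodule.subset_span hvC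
      rw [h] at this; simpa using this
    · intro g hg u hu
      have hle : M ≤ stabSubgroup U := by
        rw [hM]; apply sInf_le
        refine ⟨stab_isAlg U, fun δ hδ => ⟨Dunit Q δ (halt δ) 1, ?_, fun x => by
          rw [Dunit_val, Dtr_apply, one_mul]⟩⟩
        intro u hu
        rw [Dunit_val, Dtr_apply]
        by_cases hδC : δ ∈ C
        · exact Submodule.add_mem _ hu (Submodule.smul_mem _ _ (Submodule.subset_span hδC))
        · rw [hborth δ hδ hδC u hu, mul_zero, zero_smul, add_zero]; exact hu
      exact hle hg u hu
    · intro x hx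
      by_cases hxC : x ∈ C
      · exact Or.inl (Submodule.subset_span hxC)
      · right
        intro u hu
        rw [skew Q halt u x, hborth x hx hxC u hu, neg_zero]
  · right
    push_neg at hcase
    have hmid : ∀ v w : V, v ∈ R → w ∈ R → v ≠ 0 → w ≠ 0 →
        ∃ y ∈ R, Q v y ≠ 0 ∧ Q y w ≠ 0 := by
      intro v w hv hw hv0 hw0
      exact mid_lemma Q halt hnd R hst hv hw hw0 (hcase v hv hv0)
    have hall : ∀ z : V, z ≠ 0 → z ∈ R := fun z hz =>
      all_mem Q halt hnd R hspan hst hmid hz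
    have hTall : ∀ (z : V) (t : ℂ), Dunit Q z (halt z) t ∈ M := by
      intro z t
      rcases eq_or_ne z 0 with rfl | hz
      · have : Dunit Q 0 (halt 0) t = 1 := Units.ext (by
          ext x
          simp [Dtr_apply])
        rw [this]; exact one_mem _
      · exact M_tunit_mem Q halt R M hM (hall z hz) t
    ext g
    simp only [SetLike.mem_coe, Set.mem_setOf_eq]
    constructor
    · intro hg
      exact (mem_SpGroup Q).mp (M_le_Sp Q halt R M hM hg)
    · intro hg
      exact sp_gen Q halt hnd M hTall ((mem_SpGroup Q).mpr hg)
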